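/- Let k and t be integers with k ≥ 2 and t ≥ 1, and let n be an integer with n ≥ ⌊(2k+3)t/2⌋ + 2. Let G = K_t ∨ (K_{n − ⌊(2k+3)t/2⌋ − 1} ∪ (⌊(2k+1)t/2⌋ + 1)·K_1), the join of a complete graph on t vertices with the disjoint union of a complete graph on n − ⌊(2k+3)t/2⌋ − 1 vertices and ⌊(2k+1)t/2⌋ + 1 isolated vertices. Then |E(G)| = C(n − ⌊(2k+1)t/2⌋ − 1, 2) + t·(⌊(2k+1)t/2⌋ + 1), and there exists a subset S ⊆ V(G) (namely S = V(K_t), with |S| = t) such that 2·i(G−S) > (2k+1)·|S|. -/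

import Mathlib

/-- The number of isolated vertices of the induced subgraph `G − S`:
vertices outside `S` having no neighbor outside `S`. -/
def isoCount {V : Type*} [Fintype V] [DecidableEq V] (G : SimpleGraph V)
    [DecidableRel G.Adj] (S : Finset V) : ℕ :=
  (Finset.univ.filter (fun v => v ∉ S ∧ ∀ w, w ∉ S → ¬ G.Adj v w)).card

/-- Rank of a vertex of `K_t ∨ (K_a ∪ b·K_1)`: `0` on `K_t`, `1` on `K_a`, `2` on the
isolated part. -/
def rnk {t a b : ℕ} : Fin t ⊕ (Fin a ⊕ Fin b) → ℕ
  | Sum.inl _ => 0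
  | Sum.inr (Sum.inl _) => 1
  | Sum.inr (Sum.inr _) => 2

/-- The join `K_t ∨ (K_a ∪ b·K_1)`: every vertex of `K_t` is adjacent to all other
vertices, and the vertices of `K_a` are moreover pairwise adjacent. -/
def joinGraph (t a b : ℕ) : SimpleGraph (Fin t ⊕ (Fin a ⊕ Fin b)) where
  Adj u v := u ≠ v ∧ (rnk u = 0 ∨ rnk v = 0 ∨ (rnk u = 1 ∧ rnk v = 1))
  symm := by constructor; rintro u v ⟨h1, h2⟩; exact ⟨h1.symm, by tauto⟩
  loopless := by constructor; rintro u ⟨h, -⟩; exact h rfl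

instance (t a b : ℕ) : DecidableRel (joinGraph t a b).Adj := fun u v =>
  decidable_of_iff (u ≠ v ∧ (rnk u = 0 ∨ rnk v = 0 ∨ (rnk u = 1 ∧ rnk v = 1))) Iff.rfl

/-- **Remark 3.1.** For `k ≥ 2`, `t ≥ 1` and `n ≥ ⌊(2k+3)t/2⌋ + 2`, the graph
`G = K_t ∨ (K_{n−⌊(2k+3)t/2⌋−1} ∪ (⌊(2k+1)t/2⌋+1)·K_1)` (of order `n`) satisfies
`|E(G)| = C(n − ⌊(2k+1)t/2⌋ − 1, 2) + t(⌊(2k+1)t/2⌋ + 1)`, and there is a vertex subset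
`S` with `|S| = t` (namely `V(K_t)`) such that `2·i(G−S) > (2k+1)·|S|`. -/
lemma deg_inl (t a b : ℕ) (i : Fin t) :
    (joinGraph t a b).degree (Sum.inl i) = t + a + b - 1 := by
  rw [← SimpleGraph.card_neighborFinset_eq_degree]
  have : (joinGraph t a b).neighborFinset (Sum.inl i) = Finset.univ.erase (Sum.inl i) := by
    ext v
    rw [SimpleGraph.mem_neighborFinset]
    simp [SimpleGraph.mem_neighborFinset, joinGraph, rnk, eq_comm, ne_comm]
  rw [this, Finset.card_erase_of_mem (Finset.mem_univ _), Finset.card_univ]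
  simp only [Fintype.card_sum, Fintype.card_fin]
  omega

lemma deg_inr_inl (t a b : ℕ) (j : Fin a) :
    (joinGraph t a b).degree (Sum.inr (Sum.inl j)) = t + a - 1 := by
  rw [← SimpleGraph.card_neighborFinset_eq_degree]
  have : (joinGraph t a b).neighborFinset (Sum.inr (Sum.inl j)) =
      ((Finset.univ.map ⟨Sum.inl, Sum.inl_injective⟩) ∪
        (Finset.univ.map ⟨fun x => Sum.inr (Sum.inl x), fun x y h => by
          simpa using h⟩)).erase (Sum.inr (Sum.inl j)) := by
    ext v
    rw [SimpleGraph.mem_neighborFinset]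
    rcases v with i | (x | y) <;>
      simp [SimpleGraph.mem_neighborFinset, joinGraph, rnk, Sum.inl.injEq, Sum.inr.injEq, eq_comm]
    · exact fun _ => ⟨x, rfl⟩
    · exact fun x' h => by cases h
  rw [this]
  rw [Finset.card_erase_of_mem (by simp; exact ⟨j, rfl⟩), Finset.card_union_of_disjoint (by
    simp [Finset.disjoint_left])]
  simp

lemma deg_inr_inr (t a b : ℕ) (j : Fin b) :
    (joinGraph t a b).degree (Sum.inr (Sum.inr j)) = t := by
  rw [← SimpleGraph.card_neighborFinset_eq_degree]
  have : (joinGraph t a b).neighborFinset (Sum.inr (Sum.inr j)) =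
      Finset.univ.map ⟨Sum.inl, Sum.inl_injective⟩ := by
    ext v
    rw [SimpleGraph.mem_neighborFinset]
    rcases v with i | (x | y) <;>
      simp [SimpleGraph.mem_neighborFinset, joinGraph, rnk]
  rw [this]; simp

lemma edgeCount (t a b : ℕ) (ht : 1 ≤ t) :
    (joinGraph t a b).edgeFinset.card = (t + a).choose 2 + t * b := by
  obtain ⟨t', rfl⟩ := Nat.exists_eq_add_of_le ht
  have hsum := SimpleGraph.sum_degrees_eq_twice_card_edges (joinGraph (1 + t') a b)
  simp only [Fintype.sum_sum_type, deg_inl, deg_inr_inl, deg_inr_inr,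
    Finset.sum_const, Finset.card_univ, Fintype.card_fin, smul_eq_mul,
    show 1 + t' + a + b - 1 = t' + a + b from by omega,
    show 1 + t' + a - 1 = t' + a from by omega] at hsum
  have h2 : 2 * ((1 + t' + a).choose 2) = (1 + t' + a) * (t' + a) := by
    rw [Nat.choose_two_right, show 1 + t' + a - 1 = t' + a from by omega,
      Nat.mul_div_cancel']
    rw [show 1 + t' + a = (t' + a) + 1 from by omega, mul_comm]
    exact (Nat.even_mul_succ_self _).two_dvd
  apply Nat.eq_of_mul_eq_mul_left (show 0 < 2 by norm_num)
  rw [← hsum, show 2 * ((1 + t' + a).choose 2 + (1 + t') * b)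
      = 2 * ((1 + t' + a).choose 2) + 2 * ((1 + t') * b) from by ring, h2]
  ring

lemma iso_lb (t a b : ℕ) :
    b ≤ isoCount (joinGraph t a b) (Finset.univ.map ⟨Sum.inl, Sum.inl_injective⟩) := by
  have hsub : (Finset.univ.map ⟨fun x : Fin b => Sum.inr (Sum.inr x), fun x y h => by
      simpa using h⟩) ⊆ (Finset.univ.filter (fun v => v ∉ (Finset.univ.map
        ⟨Sum.inl, Sum.inl_injective⟩ : Finset (Fin t ⊕ (Fin a ⊕ Fin b))) ∧
        ∀ w, w ∉ (Finset.univ.map ⟨Sum.inl, Sum.inl_injective⟩) →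
          ¬ (joinGraph t a b).Adj v w)) := by
    intro v hv
    simp only [Finset.mem_map, Finset.mem_univ, true_and, Function.Embedding.coeFn_mk] at hv
    obtain ⟨j, rfl⟩ := hv
    simp only [Finset.mem_filter, Finset.mem_univ, true_and]
    refine ⟨by simp, ?_⟩
    rintro (i | (x | y)) hw hadj
    · simp at hw
    · exact absurd hadj.2 (by simp [rnk, Function.Embedding.coeFn_mk]; intro h; cases h)
    · exact absurd hadj.2 (by simp [rnk, Function.Embedding.coeFn_mk])
  calc b = (Finset.univ.map ⟨fun x : Fin b => Sum.inr (Sum.inr x), fun x y h => by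
        simpa using h⟩ : Finset (Fin t ⊕ (Fin a ⊕ Fin b))).card := by simp
    _ ≤ _ := Finset.card_le_card hsub

theorem stmt14 (k t n : ℕ) (hk : 2 ≤ k) (ht : 1 ≤ t)
    (hn : ((2 * k + 3) * t) / 2 + 2 ≤ n) :
    (joinGraph t (n - ((2 * k + 3) * t) / 2 - 1)
        (((2 * k + 1) * t) / 2 + 1)).edgeFinset.card
      = Nat.choose (n - ((2 * k + 1) * t) / 2 - 1) 2 + t * (((2 * k + 1) * t) / 2 + 1)
    ∧ ∃ S : Finset (Fin t ⊕ (Fin (n - ((2 * k + 3) * t) / 2 - 1)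
          ⊕ Fin (((2 * k + 1) * t) / 2 + 1))),
        S.card = t ∧
        (2 * k + 1) * S.card
          < 2 * isoCount (joinGraph t (n - ((2 * k + 3) * t) / 2 - 1)
              (((2 * k + 1) * t) / 2 + 1)) S := by
  have hD : ((2 * k + 3) * t) / 2 = ((2 * k + 1) * t) / 2 + t := by
    rw [show (2 * k + 3) * t = (2 * k + 1) * t + 2 * t from by ring]
    omega
  constructor
  · rw [edgeCount _ _ _ ht]
    congr 1
    congr 1
    omega
  · refine ⟨Finset.univ.map ⟨Sum.inl, Sum.inl_injective⟩, by simp, ?_⟩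
    have := iso_lb t (n - ((2 * k + 3) * t) / 2 - 1) (((2 * k + 1) * t) / 2 + 1)
    have hcard : (Finset.univ.map (⟨Sum.inl, Sum.inl_injective⟩ :
        Fin t ↪ Fin t ⊕ (Fin (n - ((2 * k + 3) * t) / 2 - 1)
          ⊕ Fin (((2 * k + 1) * t) / 2 + 1)))).card = t := by simp
    rw [hcard]
    omega
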